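/- Let a < b and let F : Δ_{a,b} → ℝ be continuously differentiable on Δ_{a,b}. Define V : Δ_{a,b} → ℝ by V(u,s) = ∫₀^1 F(s + (u−s)r, s) / √(r(1−r)) dr. Then: (i) V(s,s) = π·F(s,s) for every s ∈ [a,b]; and (ii) for every s ∈ [a,b), lim_{u→s⁺} (V(u,s) − V(s,s))/(u−s) = (π/2)·∂₁F(s,s), where ∂₁F denotes the partial derivative of F with respect to its first argument. -/

import Mathlib

open MeasureTheory Real

/-- The closed triangle `Δ_{a,b} = {(u,s) : a ≤ s ≤ u ≤ b}`. -/
def triangle (a b : ℝ) : Set (ℝ × ℝ) :=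
  {p : ℝ × ℝ | a ≤ p.2 ∧ p.2 ≤ p.1 ∧ p.1 ≤ b}

/-- The kernel `V(u,s) = ∫₀¹ F(s + (u-s)r, s) / √(r(1-r)) dr` of the Volterra equation
obtained from a generalized Abel equation with kernel `F`. -/
noncomputable def Vker (F : ℝ × ℝ → ℝ) (u s : ℝ) : ℝ :=
  ∫ r in (0 : ℝ)..1, F (s + (u - s) * r, s) / Real.sqrt (r * (1 - r))

noncomputable def wt (r : ℝ) : ℝ := 1 / Real.sqrt (r * (1 - r))

lemma wt_nonneg (r : ℝ) : 0 ≤ wt r := by unfold wt; positivity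

lemma wt_measurable : Measurable wt :=
  measurable_const.div ((Real.continuous_sqrt.comp (by continuity)).measurable)

lemma wt_hasDeriv {r : ℝ} (hr : r ∈ Set.Ioo (0:ℝ) 1) :
    HasDerivAt (fun r => Real.arcsin (2 * r - 1)) (wt r) r := by
  obtain ⟨h0, h1⟩ := hr
  have h₁ : (2 * r - 1 : ℝ) ≠ -1 := by intro h; nlinarith
  have h₂ : (2 * r - 1 : ℝ) ≠ 1 := by intro h; nlinarith
  have hlin : HasDerivAt (fun r : ℝ => 2 * r - 1) 2 r := by
    simpa using ((hasDerivAt_id r).const_mul 2).sub_const 1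
  have := (Real.hasDerivAt_arcsin h₁ h₂).comp r hlin
  refine this.congr_deriv ?_
  symm
  have key : 1 - (2 * r - 1) ^ 2 = 4 * (r * (1 - r)) := by ring
  rw [key, show (4 : ℝ) = 2 ^ 2 by norm_num, Real.sqrt_mul (by positivity),
    Real.sqrt_sq (by norm_num : (0:ℝ) ≤ 2)]
  have hpos : 0 < Real.sqrt (r * (1 - r)) := Real.sqrt_pos.2 (by nlinarith)
  unfold wt
  field_simp

lemma wt_cont : ContinuousOn (fun r => Real.arcsin (2 * r - 1)) (Set.Icc (0:ℝ) 1) :=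
  (Real.continuous_arcsin.comp (by continuity)).continuousOn

lemma wt_integrableOn : IntegrableOn wt (Set.Ioc (0:ℝ) 1) := by
  apply intervalIntegral.integrableOn_deriv_of_nonneg wt_cont (fun x hx => wt_hasDeriv hx)
  intro x hx
  exact wt_nonneg x

lemma wt_intervalIntegrable : IntervalIntegrable wt volume 0 1 :=
  (intervalIntegrable_iff_integrableOn_Ioc_of_le (by norm_num)).2 wt_integrableOn

lemma wt_integral : ∫ r in (0:ℝ)..1, wt r = Real.pi := by
  rw [intervalIntegral.integral_eq_sub_of_hasDeriv_right_of_le (by norm_num) wt_cont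
    (fun x hx => (wt_hasDeriv hx).hasDerivWithinAt) wt_intervalIntegrable]
  norm_num [Real.arcsin_one, Real.arcsin_neg_one]

lemma mul_wt_intervalIntegrable {g : ℝ → ℝ} (hg : ContinuousOn g (Set.Icc 0 1)) :
    IntervalIntegrable (fun r => g r * wt r) volume 0 1 := by
  obtain ⟨C, hC⟩ := isCompact_Icc.exists_bound_of_continuousOn hg
  apply (wt_intervalIntegrable.const_mul C).mono_fun
  · exact ((hg.mono (by rw [Set.uIoc_of_le (zero_le_one)]; exact Set.Ioc_subset_Icc_self)).aestronglyMeasurable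
      measurableSet_uIoc).mul ((wt_measurable.aestronglyMeasurable).restrict)
  · filter_upwards [ae_restrict_mem measurableSet_uIoc] with x hx
    rw [Set.uIoc_of_le zero_le_one] at hx
    have h1 : ‖g x‖ ≤ C := hC x (Set.Ioc_subset_Icc_self hx)
    rw [norm_mul, norm_mul]
    have : ‖g x‖ ≤ ‖C‖ := h1.trans (le_abs_self C)
    gcongr

lemma r_wt_intervalIntegrable : IntervalIntegrable (fun r => r * wt r) volume 0 1 :=
  mul_wt_intervalIntegrable continuous_id.continuousOn

lemma r_wt_integral : ∫ r in (0:ℝ)..1, r * wt r = Real.pi / 2 := by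
  have hsub_int : IntervalIntegrable (fun r => (1 - r) * wt r) volume 0 1 :=
    mul_wt_intervalIntegrable ((continuous_const.sub continuous_id).continuousOn)
  have hsymm : ∫ r in (0:ℝ)..1, (1 - r) * wt r = ∫ r in (0:ℝ)..1, r * wt r := by
    have h := intervalIntegral.integral_comp_sub_left (a := (0:ℝ)) (b := 1)
      (fun x => x * wt x) 1
    norm_num at h
    rw [← h]
    apply intervalIntegral.integral_congr
    intro x _
    have : wt (1 - x) = wt x := by
      unfold wt; rw [show (1 - x) * (1 - (1 - x)) = x * (1 - x) by ring]
    simp [this]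
  have hadd : (∫ r in (0:ℝ)..1, r * wt r) + ∫ r in (0:ℝ)..1, (1 - r) * wt r = Real.pi := by
    rw [← intervalIntegral.integral_add r_wt_intervalIntegrable hsub_int, ← wt_integral]
    apply intervalIntegral.integral_congr
    intro x _
    ring
  linarith [hsymm, hadd]


/-- Properties of the kernel `V`: (i) `V(s,s) = π F(s,s)`; (ii) the one-sided derivative
of `u ↦ V(u,s)` at `u = s` equals `(π/2) ∂₁F(s,s)`, where `∂₁F(s,s)` is the partial
derivative of `F` with respect to its first argument (computed within the triangle). -/
theorem stmt19 (a b : ℝ) (hab : a < b) (F : ℝ × ℝ → ℝ)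
    (hF : ContDiffOn ℝ 1 F (triangle a b)) :
    (∀ s ∈ Set.Icc a b, Vker F s s = Real.pi * F (s, s)) ∧
      ∀ s ∈ Set.Ico a b,
        Filter.Tendsto (fun u => (Vker F u s - Vker F s s) / (u - s))
          (nhdsWithin s (Set.Ioi s))
          (nhds (Real.pi / 2 * fderivWithin ℝ F (triangle a b) (s, s) (1, 0))) := by
  have Vker_diag : ∀ s : ℝ, Vker F s s = Real.pi * F (s, s) := by
    intro s
    have : Vker F s s = ∫ r in (0:ℝ)..1, F (s, s) * wt r := by
      unfold Vker
      apply intervalIntegral.integral_congr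
      intro r _
      dsimp only
      rw [show s + (s - s) * r = s by ring]
      unfold wt
      rw [div_eq_mul_one_div]
    rw [this, intervalIntegral.integral_const_mul, wt_integral, mul_comm]
  constructor
  · exact fun s _ => Vker_diag s
  · intro s hs
    obtain ⟨has, hsb⟩ := hs
    set T := triangle a b with hT
    have hTconv : Convex ℝ T := by
      intro x hx y hy p q hp hq hpq
      obtain ⟨hxa, hx21, hxb⟩ := hx
      obtain ⟨hya, hy21, hyb⟩ := hy
      have ea : p * a + q * a = a := by rw [← add_mul, hpq, one_mul]
      have eb : p * b + q * b = b := by rw [← add_mul, hpq, one_mul]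
      refine ⟨?_, ?_, ?_⟩ <;>
          simp only [Prod.fst_add, Prod.snd_add, Prod.smul_fst, Prod.smul_snd, smul_eq_mul] <;>
        linarith [mul_le_mul_of_nonneg_left hxa hp, mul_le_mul_of_nonneg_left hya hq,
          mul_le_mul_of_nonneg_left hx21 hp, mul_le_mul_of_nonneg_left hy21 hq,
          mul_le_mul_of_nonneg_left hxb hp, mul_le_mul_of_nonneg_left hyb hq]
    have hTclosed : IsClosed T := by
      have : T = {p : ℝ × ℝ | a ≤ p.2} ∩ ({p | p.2 ≤ p.1} ∩ {p | p.1 ≤ b}) := by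
        ext p; simp [hT, triangle, and_assoc]
      rw [this]
      exact (isClosed_le continuous_const continuous_snd).inter
        ((isClosed_le continuous_snd continuous_fst).inter
          (isClosed_le continuous_fst continuous_const))
    have hTsub : T ⊆ Set.Icc a b ×ˢ Set.Icc a b := by
      rintro ⟨x, y⟩ ⟨h1, h2, h3⟩
      exact ⟨⟨le_trans h1 h2, h3⟩, ⟨h1, le_trans h2 h3⟩⟩
    have hTcomp : IsCompact T :=
      (isCompact_Icc.prod isCompact_Icc).of_isClosed_subset hTclosed hTsub
    have hint_ne : (((a + 2*b)/3 : ℝ), ((2*a + b)/3 : ℝ)) ∈ interior T := by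
      rw [mem_interior]
      refine ⟨{p : ℝ × ℝ | a < p.2 ∧ p.2 < p.1 ∧ p.1 < b}, ?_, ?_, ?_⟩
      · rintro ⟨x, y⟩ ⟨h1, h2, h3⟩
        exact ⟨h1.le, h2.le, h3.le⟩
      · have : {p : ℝ × ℝ | a < p.2 ∧ p.2 < p.1 ∧ p.1 < b}
            = {p : ℝ × ℝ | a < p.2} ∩ ({p | p.2 < p.1} ∩ {p | p.1 < b}) := by
          ext p; simp [and_assoc]
        rw [this]
        exact (isOpen_lt continuous_const continuous_snd).inter
          ((isOpen_lt continuous_snd continuous_fst).inter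
            (isOpen_lt continuous_fst continuous_const))
      · show a < (2*a + b)/3 ∧ (2*a + b)/3 < (a + 2*b)/3 ∧ (a + 2*b)/3 < b
        refine ⟨by linarith, by linarith, by linarith⟩
    have hTuniq : UniqueDiffOn ℝ T := uniqueDiffOn_convex hTconv ⟨_, hint_ne⟩
    have hsT : ((s : ℝ), s) ∈ T := ⟨has, le_rfl, hsb.le⟩
    have hDiff : DifferentiableOn ℝ F T := hF.differentiableOn one_ne_zero
    have hcontF : ContinuousOn F T := hF.continuousOn
    have hfd : ContinuousOn (fderivWithin ℝ F T) T := hF.continuousOn_fderivWithin hTuniq le_rfl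
    obtain ⟨M, hM⟩ := hTcomp.exists_bound_of_continuousOn hfd
    set L := fderivWithin ℝ F T (s, s) with hLdef
    have hmaps : ∀ u ∈ Set.Ioc s b, ∀ r ∈ Set.Icc (0:ℝ) 1, (s + (u - s) * r, s) ∈ T := by
      rintro u ⟨hsu, hub⟩ r ⟨hr0, hr1⟩
      refine ⟨has, show s ≤ s + (u - s) * r by nlinarith, show s + (u - s) * r ≤ b by nlinarith⟩
    have hgc : ∀ u ∈ Set.Ioc s b,
        ContinuousOn (fun r => F (s + (u - s) * r, s)) (Set.Icc (0:ℝ) 1) := by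
      intro u hu
      apply hcontF.comp (Continuous.continuousOn (by continuity))
      intro r hr
      exact hmaps u hu r hr
    have hIoc : Set.Ioc s b ∈ nhdsWithin s (Set.Ioi s) := Ioc_mem_nhdsGT_of_mem ⟨le_rfl, hsb⟩
    have key : ∀ᶠ u in nhdsWithin s (Set.Ioi s),
        (∫ r in (0:ℝ)..1, (u - s)⁻¹ * ((F (s + (u - s) * r, s) - F (s, s)) * wt r))
          = (Vker F u s - Vker F s s) / (u - s) := by
      filter_upwards [hIoc] with u hu
      have h1 : IntervalIntegrable (fun r => F (s + (u - s) * r, s) * wt r) volume 0 1 :=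
        mul_wt_intervalIntegrable (hgc u hu)
      have h2 : IntervalIntegrable (fun r => F (s, s) * wt r) volume 0 1 :=
        mul_wt_intervalIntegrable continuousOn_const
      have e1 : Vker F u s = ∫ r in (0:ℝ)..1, F (s + (u - s) * r, s) * wt r := by
        unfold Vker
        apply intervalIntegral.integral_congr
        intro r _
        dsimp only
        unfold wt
        rw [div_eq_mul_one_div]
      have e2 : Vker F s s = ∫ r in (0:ℝ)..1, F (s, s) * wt r := by
        unfold Vker
        apply intervalIntegral.integral_congr
        intro r _
        dsimp only
        rw [show s + (s - s) * r = s by ring]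
        unfold wt
        rw [div_eq_mul_one_div]
      rw [e1, e2, ← intervalIntegral.integral_sub h1 h2, ← intervalIntegral.integral_div]
      apply intervalIntegral.integral_congr
      intro r _
      ring
    have target_eq : Real.pi / 2 * L (1, 0) = ∫ r in (0:ℝ)..1, (r * L (1, 0)) * wt r := by
      rw [intervalIntegral.integral_congr
          (g := fun r => L (1, 0) * (r * wt r)) (fun r _ => by ring),
        intervalIntegral.integral_const_mul, r_wt_integral]
      ring
    rw [show Real.pi / 2 * fderivWithin ℝ F T (s, s) (1, 0)
        = ∫ r in (0:ℝ)..1, (r * L (1, 0)) * wt r from target_eq]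
    refine Filter.Tendsto.congr' key ?_
    apply intervalIntegral.tendsto_integral_filter_of_dominated_convergence
        (bound := fun r => |M| * (r * wt r))
    · -- measurability
      filter_upwards [hIoc] with u hu
      have hsubIoc : Set.uIoc (0:ℝ) 1 ⊆ Set.Icc (0:ℝ) 1 := by
        rw [Set.uIoc_of_le zero_le_one]; exact Set.Ioc_subset_Icc_self
      exact (((((hgc u hu).mono hsubIoc).aestronglyMeasurable
          measurableSet_uIoc).sub aestronglyMeasurable_const).mul
          ((wt_measurable.aestronglyMeasurable).restrict)).const_mul _
    · -- bound
      filter_upwards [hIoc] with u hu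
      apply Filter.Eventually.of_forall
      intro r hr
      rw [Set.uIoc_of_le zero_le_one] at hr
      obtain ⟨hr0, hr1⟩ := hr
      obtain ⟨hsu, hub⟩ := hu
      have hpt : (s + (u - s) * r, s) ∈ T := hmaps u ⟨hsu, hub⟩ r ⟨hr0.le, hr1⟩
      have hdF : ‖F (s + (u - s) * r, s) - F (s, s)‖ ≤ |M| * ((u - s) * r) := by
        have hle := hTconv.norm_image_sub_le_of_norm_fderivWithin_le hDiff
          (fun x hx => (hM x hx).trans (le_abs_self M)) hsT hpt
        have hnorm : ‖((s + (u - s) * r, s) : ℝ × ℝ) - (s, s)‖ = (u - s) * r := by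
          have heq : ((s + (u - s) * r, s) : ℝ × ℝ) - (s, s) = ((u - s) * r, 0) := by
            simp [Prod.ext_iff]
          rw [heq, Prod.norm_def]
          simp only [Real.norm_eq_abs, abs_mul, abs_zero]
          rw [abs_of_pos (by linarith : (0:ℝ) < u - s), abs_of_nonneg hr0.le]
          exact max_eq_left (mul_nonneg (show (0:ℝ) ≤ u - s by linarith) hr0.le)
        rwa [hnorm] at hle
      have h1 : ‖(F (s + (u - s) * r, s) - F (s, s)) / (u - s)‖ ≤ |M| * r := by
        rw [norm_div, Real.norm_of_nonneg (by linarith : (0:ℝ) ≤ u - s),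
          div_le_iff₀ (by linarith : (0:ℝ) < u - s)]
        calc ‖F (s + (u - s) * r, s) - F (s, s)‖ ≤ |M| * ((u - s) * r) := hdF
          _ = |M| * r * (u - s) := by ring
      calc ‖(u - s)⁻¹ * ((F (s + (u - s) * r, s) - F (s, s)) * wt r)‖
          = ‖(F (s + (u - s) * r, s) - F (s, s)) / (u - s)‖ * wt r := by
            rw [show (u - s)⁻¹ * ((F (s + (u - s) * r, s) - F (s, s)) * wt r)
              = (F (s + (u - s) * r, s) - F (s, s)) / (u - s) * wt r by ring,
              norm_mul, Real.norm_of_nonneg (wt_nonneg r)]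
        _ ≤ (|M| * r) * wt r := mul_le_mul_of_nonneg_right h1 (wt_nonneg r)
        _ = |M| * (r * wt r) := by ring
    · exact r_wt_intervalIntegrable.const_mul |M|
    · -- pointwise limit
      apply Filter.Eventually.of_forall
      intro r hr
      rw [Set.uIoc_of_le zero_le_one] at hr
      obtain ⟨hr0, hr1⟩ := hr
      have hL : HasFDerivWithinAt F L T (s, s) := (hDiff (s, s) hsT).hasFDerivWithinAt
      have hγ : HasDerivWithinAt (fun u : ℝ => ((s + (u - s) * r, s) : ℝ × ℝ)) ((r, 0))
          (Set.Icc s b) s := by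
        apply HasDerivAt.hasDerivWithinAt
        apply HasDerivAt.prodMk
        · simpa using (((hasDerivAt_id s).sub_const s).mul_const r).const_add s
        · exact hasDerivAt_const s s
      have hmapsIcc : Set.MapsTo (fun u : ℝ => ((s + (u - s) * r, s) : ℝ × ℝ))
          (Set.Icc s b) T := by
        rintro u ⟨hu1, hu2⟩
        refine ⟨has, show s ≤ s + (u - s) * r by nlinarith,
          show s + (u - s) * r ≤ b by nlinarith⟩
      have hcomp : HasDerivWithinAt (fun u => F (s + (u - s) * r, s)) (L (r, 0))
          (Set.Icc s b) s :=
        hL.comp_hasDerivWithinAt_of_eq s hγ hmapsIcc (by simp)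
      have hslope := hasDerivWithinAt_iff_tendsto_slope.1 hcomp
      have hsubf : nhdsWithin s (Set.Ioi s) ≤ nhdsWithin s (Set.Icc s b \ {s}) := by
        rw [← nhdsWithin_Ioc_eq_nhdsGT hsb]
        exact nhdsWithin_mono s (fun x hx => ⟨⟨hx.1.le, hx.2⟩, ne_of_gt hx.1⟩)
      have h2 : Filter.Tendsto (fun u => (F (s + (u - s) * r, s) - F (s, s)) / (u - s))
          (nhdsWithin s (Set.Ioi s)) (nhds (L (r, 0))) := by
        apply Filter.Tendsto.congr (fun u => ?_) (hslope.mono_left hsubf)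
        rw [slope_def_field, show s + (s - s) * r = s by ring]
      have hLr : L (r, 0) = r * L (1, 0) := by
        have heq : ((r : ℝ), (0 : ℝ)) = r • ((1 : ℝ), (0 : ℝ)) := by
          simp [Prod.smul_mk]
        rw [heq, ContinuousLinearMap.map_smul, smul_eq_mul]
      have h3 := h2.mul_const (wt r)
      rw [hLr] at h3
      apply h3.congr
      intro u
      ring
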